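/- Let E = EuclideanSpace ℝ (Fin n) with standard orthonormal basis (b i). Let T : E → (E →L[ℝ] E) be a differentiable field of operators with T x self-adjoint (⟪T x u, v⟫ = ⟪u, T x v⟫ for all u, v) at every point x, let Z : E → E be a differentiable vector field, and let φ : E → ℝ be differentiable. Then at every point x, ∑ i ⟪fderiv ℝ (fun y => φ y • (T y) (Z y)) x (b i), b i⟫ = φ(x) · ∑ i ⟪(fderiv ℝ T x (b i)) (Z x), b i⟫ + φ(x) · ∑ i ⟪T x (fderiv ℝ Z x (b i)), b i⟫ + ⟪T x (gradient φ x), Z x⟫. That is, div(T(φZ)) = φ·(div T)(Z) + φ·⟨∇Z, T⟩ + T(∇φ, Z). -/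

import Mathlib

open RealInnerProductSpace

theorem div_T_phi_Z (n : ℕ)
    (T : EuclideanSpace ℝ (Fin n) → (EuclideanSpace ℝ (Fin n) →L[ℝ] EuclideanSpace ℝ (Fin n)))
    (hT : Differentiable ℝ T)
    (hTsym : ∀ x u v, ⟪T x u, v⟫ = ⟪u, T x v⟫)
    (Z : EuclideanSpace ℝ (Fin n) → EuclideanSpace ℝ (Fin n))
    (hZ : Differentiable ℝ Z)
    (φ : EuclideanSpace ℝ (Fin n) → ℝ) (hφ : Differentiable ℝ φ)
    (b : Fin n → EuclideanSpace ℝ (Fin n))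
    (hb : b = fun i => EuclideanSpace.basisFun (Fin n) ℝ i)
    (x : EuclideanSpace ℝ (Fin n)) :
    ∑ i, ⟪fderiv ℝ (fun y => φ y • (T y) (Z y)) x (b i), b i⟫
      = φ x * ∑ i, ⟪(fderiv ℝ T x (b i)) (Z x), b i⟫
        + φ x * ∑ i, ⟪T x (fderiv ℝ Z x (b i)), b i⟫
        + ⟪T x (gradient φ x), Z x⟫ := by
  have hF : Differentiable ℝ (fun y => (T y) (Z y)) := hT.clm_apply hZ
  have hd : ∀ v, fderiv ℝ (fun y => φ y • (T y) (Z y)) x v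
      = φ x • ((fderiv ℝ T x v) (Z x)) + φ x • ((T x) (fderiv ℝ Z x v))
        + fderiv ℝ φ x v • (T x) (Z x) := by
    intro v
    rw [fderiv_fun_smul (hφ x) (hF x), fderiv_clm_apply (hT x) (hZ x)]
    simp [smul_add, add_comm]
  have hg : ∀ v : EuclideanSpace ℝ (Fin n), fderiv ℝ φ x v = ⟪gradient φ x, v⟫ := by
    intro v
    rw [gradient, InnerProductSpace.toDual_symm_apply]
  calc ∑ i, ⟪fderiv ℝ (fun y => φ y • (T y) (Z y)) x (b i), b i⟫
      = ∑ i, (φ x * ⟪(fderiv ℝ T x (b i)) (Z x), b i⟫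
          + φ x * ⟪(T x) (fderiv ℝ Z x (b i)), b i⟫
          + ⟪gradient φ x, b i⟫ * ⟪b i, (T x) (Z x)⟫) := by
        refine Finset.sum_congr rfl fun i _ => ?_
        rw [hd, hg]
        simp only [inner_add_left, real_inner_smul_left]
        rw [real_inner_comm ((T x) (Z x)) (b i)]
    _ = φ x * ∑ i, ⟪(fderiv ℝ T x (b i)) (Z x), b i⟫
        + φ x * ∑ i, ⟪T x (fderiv ℝ Z x (b i)), b i⟫
        + ⟪T x (gradient φ x), Z x⟫ := by
        rw [Finset.sum_add_distrib, Finset.sum_add_distrib, ← Finset.mul_sum, ← Finset.mul_sum]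
        congr 1
        have : ∀ i, b i = (EuclideanSpace.basisFun (Fin n) ℝ : OrthonormalBasis (Fin n) ℝ _) i := by
          simp [hb]
        simp_rw [this]
        rw [OrthonormalBasis.sum_inner_mul_inner, hTsym]
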